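/- Let π : X → [0,∞) be measurable with ∫ π dν = 1 and let α ∈ (0,1). For θ ∈ Θ define f(θ) = (1/(α−1)) · log ∫ π(x)^α q_θ(x)^{1−α} ν(dx) (the Rényi divergence RD_α(π, q_θ); the integral is finite by Hölder's inequality and positive). Then for every θ in the interior of Θ: the functions x ↦ q_θ(x) Γ(x) and x ↦ π(x)^α q_θ(x)^{1−α} Γ(x) are Bochner ν-integrable, and f has a gradient at θ equal to m_θ − m̃_θ, where m_θ = ∫ q_θ(x) Γ(x) ν(dx) and m̃_θ = (∫ π(x)^α q_θ(x)^{1−α} Γ(x) ν(dx)) / (∫ π(x)^α q_θ(x)^{1−α} ν(dx)). -/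

import Mathlib

open MeasureTheory Real
open scoped RealInnerProductSpace

open Metric

section Key

variable {X : Type*} [MeasurableSpace X] {ν : Measure X}
  {H : Type*} [NormedAddCommGroup H] [InnerProductSpace ℝ H] [FiniteDimensional ℝ H]
  [MeasurableSpace H] [BorelSpace H]

/-- Pointwise exponential bound via an orthonormal basis. -/
lemma exp_norm_le_sum (b : OrthonormalBasis (Fin (Module.finrank ℝ H)) ℝ H)
    {c : ℝ} (hc : 0 ≤ c) (v : H) :
    exp (c * ‖v‖) ≤ ∑ T ∈ Finset.univ.powerset,
      exp ⟪c • ((∑ i ∈ T, b i) - ∑ i ∈ Finset.univ \ T, b i), v⟫ := by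
  have hnorm : ‖v‖ ≤ ∑ i, |⟪b i, v⟫| := by
    calc ‖v‖ = ‖∑ i, ⟪b i, v⟫ • b i‖ := by rw [b.sum_repr' v]
    _ ≤ ∑ i, ‖⟪b i, v⟫ • b i‖ := norm_sum_le _ _
    _ = ∑ i, |⟪b i, v⟫| := by
        refine Finset.sum_congr rfl fun i _ => ?_
        simp [norm_smul, b.orthonormal.1 i]
  calc exp (c * ‖v‖) ≤ exp (∑ i, c * |⟪b i, v⟫|) := by
        rw [← Finset.mul_sum]
        exact exp_le_exp.2 (by nlinarith)
  _ = ∏ i, exp (c * |⟪b i, v⟫|) := exp_sum _ _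
  _ ≤ ∏ i, (exp (c * ⟪b i, v⟫) + exp (-(c * ⟪b i, v⟫))) := by
      refine Finset.prod_le_prod (fun i _ => (exp_pos _).le) fun i _ => ?_
      rcases abs_cases (⟪b i, v⟫ : ℝ) with ⟨h1, _⟩ | ⟨h1, _⟩
      · rw [h1]
        exact le_add_of_nonneg_right (exp_pos _).le
      · rw [h1, mul_neg]
        exact le_add_of_nonneg_left (exp_pos _).le
  _ = ∑ T ∈ Finset.univ.powerset,
        exp ⟪c • ((∑ i ∈ T, b i) - ∑ i ∈ Finset.univ \ T, b i), v⟫ := by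
      rw [Finset.prod_add]
      refine Finset.sum_congr rfl fun T _ => ?_
      rw [← exp_sum, ← exp_sum, ← exp_add]
      congr 1
      rw [real_inner_smul_left, inner_sub_left, sum_inner, sum_inner,
        Finset.sum_neg_distrib, mul_sub, Finset.mul_sum, Finset.mul_sum]
      ring

lemma key_lemma (Γ : X → H) (hΓ : Measurable Γ)
    (w : X → ℝ) (hw : Measurable w) (hw0 : ∀ x, 0 ≤ w x)
    {θ : H} (hθ : θ ∈ interior {ϑ : H | Integrable (fun x => w x * exp ⟪ϑ, Γ x⟫) ν}) :
    Integrable (fun x => (w x * exp ⟪θ, Γ x⟫) • Γ x) ν ∧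
    HasFDerivAt (fun ϑ => ∫ x, w x * exp ⟪ϑ, Γ x⟫ ∂ν)
      (innerSL ℝ (∫ x, (w x * exp ⟪θ, Γ x⟫) • Γ x ∂ν)) θ := by
  classical
  set S := {ϑ : H | Integrable (fun x => w x * exp ⟪ϑ, Γ x⟫) ν} with hS
  obtain ⟨δ, hδ0, hball⟩ := Metric.isOpen_iff.1 isOpen_interior θ hθ
  set ε := δ / (2 * (Module.finrank ℝ H : ℝ) + 2) with hε
  have hε0 : 0 < ε := by positivity
  set b := stdOrthonormalBasis ℝ H with hb
  set u : Finset (Fin (Module.finrank ℝ H)) → H :=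
    fun T => (2 * ε) • ((∑ i ∈ T, b i) - ∑ i ∈ Finset.univ \ T, b i) with hu
  have hunorm : ∀ T, ‖u T‖ < δ := by
    intro T
    have h1 : ‖(∑ i ∈ T, b i) - ∑ i ∈ Finset.univ \ T, b i‖ ≤ (Module.finrank ℝ H : ℝ) := by
      calc ‖(∑ i ∈ T, b i) - ∑ i ∈ Finset.univ \ T, b i‖
          ≤ ‖∑ i ∈ T, b i‖ + ‖∑ i ∈ Finset.univ \ T, b i‖ := norm_sub_le _ _
      _ ≤ (∑ i ∈ T, ‖b i‖) + ∑ i ∈ Finset.univ \ T, ‖b i‖ :=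
          add_le_add (norm_sum_le _ _) (norm_sum_le _ _)
      _ = ∑ i ∈ Finset.univ, ‖b i‖ := by
          rw [add_comm]; exact Finset.sum_sdiff T.subset_univ
      _ = (Module.finrank ℝ H : ℝ) := by simp [b.orthonormal.1]
    have h2 : ‖u T‖ ≤ 2 * ε * (Module.finrank ℝ H : ℝ) := by
      rw [hu]
      simp only
      rw [norm_smul, Real.norm_eq_abs, abs_of_nonneg (by positivity)]
      exact mul_le_mul_of_nonneg_left h1 (by positivity)
    have h3 : (0:ℝ) < 2 * (Module.finrank ℝ H : ℝ) + 2 := by positivity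
    have h4 : 2 * ε * (Module.finrank ℝ H : ℝ) < δ := by
      have h5 : ε * (2 * (Module.finrank ℝ H : ℝ) + 2) = δ := by
        rw [hε]; field_simp
      nlinarith [hε0, Nat.cast_nonneg (α := ℝ) (Module.finrank ℝ H)]
    exact lt_of_le_of_lt h2 h4
  have hmemS : ∀ T, θ + u T ∈ S := fun T =>
    interior_subset (hball (by rw [mem_ball_iff_norm]; simpa using hunorm T))
  have hθS : θ ∈ S := interior_subset hθ
  have hinner : ∀ ϑ : H, Measurable fun x => (⟪ϑ, Γ x⟫ : ℝ) := fun ϑ => by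
    have h1 : Continuous fun y : H => (⟪ϑ, y⟫ : ℝ) := (innerSL ℝ ϑ).continuous
    exact h1.measurable.comp hΓ
  have hFmeas : ∀ ϑ : H, AEStronglyMeasurable (fun x => w x * exp ⟪ϑ, Γ x⟫) ν := fun ϑ =>
    (hw.mul (measurable_exp.comp (hinner ϑ))).aestronglyMeasurable
  -- the integrable bound
  set g : X → ℝ := fun x => ε⁻¹ * ∑ T ∈ Finset.univ.powerset,
    (w x * exp ⟪θ + u T, Γ x⟫) with hg
  have hg_int : Integrable g ν :=
    (integrable_finset_sum _ fun T _ => hmemS T).const_mul _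
  -- pointwise bound
  have hbound : ∀ x, ∀ ϑ ∈ ball θ ε, w x * exp ⟪ϑ, Γ x⟫ * ‖Γ x‖ ≤ g x := by
    intro x ϑ hϑ
    have hw0x := hw0 x
    have h1 : ⟪ϑ, Γ x⟫ ≤ ⟪θ, Γ x⟫ + ε * ‖Γ x‖ := by
      have ha : ⟪ϑ - θ, Γ x⟫ ≤ ε * ‖Γ x‖ :=
        (real_inner_le_norm _ _).trans
          (mul_le_mul_of_nonneg_right (mem_ball_iff_norm.1 hϑ).le (norm_nonneg _))
      have hb2 : ⟪ϑ, Γ x⟫ = ⟪θ, Γ x⟫ + ⟪ϑ - θ, Γ x⟫ := by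
        rw [← inner_add_left]; congr 1; abel
      linarith
    have h2 : ‖Γ x‖ ≤ ε⁻¹ * exp (ε * ‖Γ x‖) := by
      have h3 : ε * ‖Γ x‖ ≤ exp (ε * ‖Γ x‖) :=
        (le_add_of_nonneg_right zero_le_one).trans (Real.add_one_le_exp _)
      calc ‖Γ x‖ = ε⁻¹ * (ε * ‖Γ x‖) := by field_simp
      _ ≤ ε⁻¹ * exp (ε * ‖Γ x‖) := mul_le_mul_of_nonneg_left h3 (by positivity)
    calc w x * exp ⟪ϑ, Γ x⟫ * ‖Γ x‖
        ≤ w x * exp (⟪θ, Γ x⟫ + ε * ‖Γ x‖) * (ε⁻¹ * exp (ε * ‖Γ x‖)) := by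
          refine mul_le_mul (mul_le_mul_of_nonneg_left (exp_le_exp.2 h1) hw0x) h2
            (norm_nonneg _) (by positivity)
    _ = ε⁻¹ * (w x * exp ⟪θ, Γ x⟫ * exp (2 * ε * ‖Γ x‖)) := by
        rw [exp_add, show (2:ℝ) * ε * ‖Γ x‖ = ε * ‖Γ x‖ + ε * ‖Γ x‖ by ring, exp_add]
        ring
    _ ≤ g x := by
        rw [hg]
        refine mul_le_mul_of_nonneg_left ?_ (by positivity)
        calc w x * exp ⟪θ, Γ x⟫ * exp (2 * ε * ‖Γ x‖)
            ≤ w x * exp ⟪θ, Γ x⟫ *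
              ∑ T ∈ Finset.univ.powerset, exp ⟪u T, Γ x⟫ :=
              mul_le_mul_of_nonneg_left (exp_norm_le_sum b (by positivity) (Γ x))
                (by positivity)
        _ = ∑ T ∈ Finset.univ.powerset, (w x * exp ⟪θ + u T, Γ x⟫) := by
            rw [Finset.mul_sum]
            refine Finset.sum_congr rfl fun T _ => ?_
            rw [inner_add_left, exp_add]; ring
  -- integrability of the vector-valued integrand
  have hsm : AEStronglyMeasurable (fun x => (w x * exp ⟪θ, Γ x⟫) • Γ x) ν := by
    have h1 : Continuous fun p : ℝ × H => p.1 • p.2 := continuous_smul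
    exact h1.comp_aestronglyMeasurable
      ((hw.mul (measurable_exp.comp (hinner θ))).aestronglyMeasurable.prodMk
        hΓ.aestronglyMeasurable)
  have hint1 : Integrable (fun x => (w x * exp ⟪θ, Γ x⟫) • Γ x) ν := by
    refine Integrable.mono' hg_int hsm (Filter.Eventually.of_forall fun x => ?_)
    rw [norm_smul, Real.norm_eq_abs, abs_of_nonneg (mul_nonneg (hw0 x) (exp_pos _).le)]
    exact hbound x θ (mem_ball_self hε0)
  refine ⟨hint1, ?_⟩
  set F' : H → X → H →L[ℝ] ℝ :=
    fun ϑ x => (w x * exp ⟪ϑ, Γ x⟫) • innerSL ℝ (Γ x) with hF'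
  have hF'norm : ∀ ϑ x, ‖F' ϑ x‖ = w x * exp ⟪ϑ, Γ x⟫ * ‖Γ x‖ := by
    intro ϑ x
    simp only [hF']
    rw [norm_smul (w x * exp ⟪ϑ, Γ x⟫) (innerSL ℝ (Γ x)), Real.norm_eq_abs,
      abs_of_nonneg (mul_nonneg (hw0 x) (exp_pos _).le), innerSL_apply_norm]
  have hF'meas : AEStronglyMeasurable (F' θ) ν := by
    have h1 : Continuous fun p : ℝ × H => p.1 • innerSL ℝ p.2 :=
      continuous_fst.smul ((innerSL ℝ).continuous.comp continuous_snd)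
    exact h1.comp_aestronglyMeasurable
      ((hw.mul (measurable_exp.comp (hinner θ))).aestronglyMeasurable.prodMk
        hΓ.aestronglyMeasurable)
  have hF'int : Integrable (F' θ) ν := by
    refine Integrable.mono' hg_int hF'meas (Filter.Eventually.of_forall fun x => ?_)
    rw [hF'norm]
    exact hbound x θ (mem_ball_self hε0)
  have hdiff : ∀ x : X, ∀ ϑ : H,
      HasFDerivAt (fun ϑ : H => w x * exp ⟪ϑ, Γ x⟫) (F' ϑ x) ϑ := by
    intro x ϑ
    have h1 : HasFDerivAt (fun ϑ : H => (⟪ϑ, Γ x⟫ : ℝ)) (innerSL ℝ (Γ x)) ϑ := by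
      have h2 := (innerSL ℝ (Γ x)).hasFDerivAt (x := ϑ)
      have h3 : (fun y : H => (innerSL ℝ (Γ x)) y) = fun y : H => (⟪y, Γ x⟫ : ℝ) := by
        funext y; exact real_inner_comm _ _
      rwa [show (⇑(innerSL ℝ (Γ x)) : H → ℝ) = fun y : H => (⟪y, Γ x⟫ : ℝ) from h3] at h2
    have h4 := (h1.exp).const_mul (w x)
    rw [smul_smul] at h4
    exact h4
  have hmain := hasFDerivAt_integral_of_dominated_of_fderiv_le (𝕜 := ℝ)
    (F := fun ϑ x => w x * exp ⟪ϑ, Γ x⟫) (F' := F') (bound := g) (ball_mem_nhds θ hε0)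
    (Filter.Eventually.of_forall fun ϑ => hFmeas ϑ) hθS hF'meas
    (Filter.Eventually.of_forall fun x ϑ hϑ => by rw [hF'norm]; exact hbound x ϑ hϑ)
    hg_int
    (Filter.Eventually.of_forall fun x ϑ _ => hdiff x ϑ)
  have heq : ∫ x, F' θ x ∂ν = innerSL ℝ (∫ x, (w x * exp ⟪θ, Γ x⟫) • Γ x ∂ν) := by
    refine ContinuousLinearMap.ext fun h => ?_
    rw [ContinuousLinearMap.integral_apply hF'int]
    have h5 : ∀ x, F' θ x h = ⟪h, (w x * exp ⟪θ, Γ x⟫) • Γ x⟫ := by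
      intro x
      simp only [hF', ContinuousLinearMap.coe_smul', Pi.smul_apply, innerSL_apply_apply,
        real_inner_smul_right, smul_eq_mul]
      rw [real_inner_comm h (Γ x)]
    simp_rw [h5]
    rw [integral_inner hint1, innerSL_apply_apply, real_inner_comm]
  rw [heq] at hmain
  exact hmain


end Key

/-- For a probability density `p` (the target `π`) and `α ∈ (0,1)`, the Rényi objective
`f θ = (1/(α-1)) log ∫ p^α q_θ^{1-α} dν` has, at every `θ` in the interior of `Θ`,
a gradient equal to `m_θ - m̃_θ`, where `m_θ` is the mean of `Γ` under `q_θ` and `m̃_θ`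
is the mean of `Γ` under the normalized geometric average of `p` and `q_θ`. -/
theorem statement4
    {X : Type*} [MeasurableSpace X] (ν : Measure X) [SigmaFinite ν] (hν : ν ≠ 0)
    {H : Type*} [NormedAddCommGroup H] [InnerProductSpace ℝ H] [FiniteDimensional ℝ H]
    [MeasurableSpace H] [BorelSpace H]
    (Γ : X → H) (hΓ : Measurable Γ)
    (Θ : Set H) (hΘ : Θ = {θ : H | Integrable (fun x => exp ⟪θ, Γ x⟫) ν})
    (A : H → ℝ) (hA : ∀ θ, A θ = log (∫ x, exp ⟪θ, Γ x⟫ ∂ν))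
    (q : H → X → ℝ) (hq : ∀ θ x, q θ x = exp (⟪θ, Γ x⟫ - A θ))
    (p : X → ℝ) (hpmeas : Measurable p) (hp0 : ∀ x, 0 ≤ p x)
    (hp1 : ∫ x, p x ∂ν = 1)
    (α : ℝ) (hα : α ∈ Set.Ioo (0:ℝ) 1)
    (f : H → ℝ)
    (hf : ∀ θ, f θ = (1/(α-1)) * log (∫ x, p x ^ α * q θ x ^ (1-α) ∂ν)) :
    ∀ θ ∈ interior Θ,
      Integrable (fun x => q θ x • Γ x) ν ∧
      Integrable (fun x => (p x ^ α * q θ x ^ (1-α)) • Γ x) ν ∧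
      HasGradientAt f
        ((∫ x, q θ x • Γ x ∂ν)
          - (∫ x, p x ^ α * q θ x ^ (1-α) ∂ν)⁻¹ •
            (∫ x, (p x ^ α * q θ x ^ (1-α)) • Γ x ∂ν)) θ := by
  subst hΘ
  intro θ hθint
  obtain ⟨hα0, hα1⟩ := hα
  have hβ0 : (0:ℝ) < 1 - α := by linarith
  have hβne : (1:ℝ) - α ≠ 0 := hβ0.ne'
  have hα1ne : α - 1 ≠ 0 := by intro h; apply hβne; linarith
  -- p is integrable
  have hp_int : Integrable p ν := by
    by_contra h
    rw [integral_undef h] at hp1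
    norm_num at hp1
  -- measurability of inner products
  have hinner : ∀ (ϑ : H) (Γ' : X → H), Measurable Γ' →
      Measurable fun x => (⟪ϑ, Γ' x⟫ : ℝ) := fun ϑ Γ' hΓ' => by
    have h1 : Continuous fun y : H => (⟪ϑ, y⟫ : ℝ) := (innerSL ℝ ϑ).continuous
    exact h1.measurable.comp hΓ'
  -- first application of the key lemma : the partition function
  have hθ1 : θ ∈ interior {ϑ : H | Integrable (fun x => (1:ℝ) * exp ⟪ϑ, Γ x⟫) ν} := by
    simp only [one_mul]
    exact hθint
  have hkey1 := key_lemma (ν := ν) Γ hΓ (fun _ => (1:ℝ)) measurable_const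
    (fun _ => zero_le_one) hθ1
  have hint1 : Integrable (fun x => exp ⟪θ, Γ x⟫ • Γ x) ν := by
    simpa using hkey1.1
  have hD1 : HasFDerivAt (fun ϑ => ∫ x, exp ⟪ϑ, Γ x⟫ ∂ν)
      (innerSL ℝ (∫ x, exp ⟪θ, Γ x⟫ • Γ x ∂ν)) θ := by
    simpa using hkey1.2
  -- second application : the tilted integral
  have hΓ' : Measurable fun x => (1 - α) • Γ x := hΓ.const_smul _
  have hwmeas : Measurable fun x => p x ^ α :=
    (Real.continuous_rpow_const hα0.le).measurable.comp hpmeas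
  have hw0' : ∀ x, 0 ≤ p x ^ α := fun x => Real.rpow_nonneg (hp0 x) α
  have hsub : {ϑ : H | Integrable (fun x => exp ⟪ϑ, Γ x⟫) ν} ⊆
      {ϑ : H | Integrable (fun x => p x ^ α * exp ⟪ϑ, (1 - α) • Γ x⟫) ν} := by
    intro ϑ hϑ
    have hϑ' : Integrable (fun x => exp ⟪ϑ, Γ x⟫) ν := hϑ
    have hmaj : Integrable (fun x => α * p x + (1 - α) * exp ⟪ϑ, Γ x⟫) ν :=
      (hp_int.const_mul α).add (hϑ'.const_mul (1 - α))
    refine hmaj.mono' ((hwmeas.mul (measurable_exp.comp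
      (hinner ϑ _ hΓ'))).aestronglyMeasurable)
      (Filter.Eventually.of_forall fun x => ?_)
    rw [Real.norm_eq_abs, abs_of_nonneg (mul_nonneg (hw0' x) (exp_pos _).le)]
    have h1 : exp ⟪ϑ, (1 - α) • Γ x⟫ = exp ⟪ϑ, Γ x⟫ ^ (1 - α) := by
      rw [real_inner_smul_right, mul_comm, exp_mul]
    rw [h1]
    exact Real.geom_mean_le_arith_mean2_weighted hα0.le hβ0.le (hp0 x)
      (exp_pos _).le (by ring)
  have hθ2 : θ ∈ interior {ϑ : H | Integrable
      (fun x => p x ^ α * exp ⟪ϑ, (1 - α) • Γ x⟫) ν} := interior_mono hsub hθint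
  have hkey2 := key_lemma (ν := ν) (fun x => (1 - α) • Γ x) hΓ'
    (fun x => p x ^ α) hwmeas hw0' hθ2
  -- clean up the second application
  have hint2 : Integrable (fun x => (p x ^ α * exp ((1 - α) * ⟪θ, Γ x⟫)) • Γ x) ν := by
    have h := hkey2.1
    simp only [real_inner_smul_right] at h
    have h2 := h.smul ((1 - α)⁻¹ : ℝ)
    refine h2.congr (Filter.Eventually.of_forall fun x => ?_)
    show (1 - α)⁻¹ • ((p x ^ α * exp ((1 - α) * ⟪θ, Γ x⟫)) • ((1 - α) • Γ x)) = _
    rw [smul_comm (p x ^ α * exp ((1 - α) * ⟪θ, Γ x⟫)) ((1 - α) : ℝ) (Γ x),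
      smul_smul, inv_mul_cancel₀ hβne, one_smul]
  have hD2 : HasFDerivAt (fun ϑ => ∫ x, p x ^ α * exp ((1 - α) * ⟪ϑ, Γ x⟫) ∂ν)
      (innerSL ℝ ((1 - α) • ∫ x, (p x ^ α * exp ((1 - α) * ⟪θ, Γ x⟫)) • Γ x ∂ν)) θ := by
    have h := hkey2.2
    simp only [real_inner_smul_right] at h
    have hintegral : (∫ x, (p x ^ α * exp ((1 - α) * ⟪θ, Γ x⟫)) • ((1 - α) • Γ x) ∂ν)
        = (1 - α) • ∫ x, (p x ^ α * exp ((1 - α) * ⟪θ, Γ x⟫)) • Γ x ∂ν := by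
      rw [← integral_smul]
      congr 1; funext x; rw [smul_comm]
    rwa [hintegral] at h
  -- positivity facts
  have hsupp : 0 < ν (Function.support p) := by
    rcases eq_or_lt_of_le (show (0:ENNReal) ≤ ν (Function.support p) from zero_le) with h0 | h0
    · exfalso
      have hae : ∀ᵐ x ∂ν, p x = 0 := by
        rw [ae_iff]
        simpa [Function.support] using h0.symm
      rw [integral_congr_ae hae, integral_zero] at hp1
      norm_num at hp1
    · exact h0
  have hBpos : ∀ ϑ : H, Integrable (fun x => p x ^ α * exp ((1 - α) * ⟪ϑ, Γ x⟫)) ν →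
      0 < ∫ x, p x ^ α * exp ((1 - α) * ⟪ϑ, Γ x⟫) ∂ν := by
    intro ϑ hI
    rw [integral_pos_iff_support_of_nonneg_ae
      (Filter.Eventually.of_forall fun x => mul_nonneg (hw0' x) (exp_pos _).le) hI]
    refine lt_of_lt_of_le hsupp (measure_mono fun x hx => ?_)
    simp only [Function.mem_support] at hx ⊢
    intro hcon
    rcases mul_eq_zero.1 hcon with h | h
    · exact hx ((Real.rpow_eq_zero (hp0 x) hα0.ne').1 h)
    · exact absurd h (exp_pos _).ne'
  have hθΘ' : θ ∈ {ϑ : H | Integrable (fun x => exp ⟪ϑ, Γ x⟫) ν} := interior_subset hθint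
  have hθΘ : Integrable (fun x => exp ⟪θ, Γ x⟫) ν := hθΘ'
  have hZθpos : 0 < ∫ x, exp ⟪θ, Γ x⟫ ∂ν := by
    rw [integral_pos_iff_support_of_nonneg_ae
      (Filter.Eventually.of_forall fun x => (exp_pos _).le) hθΘ]
    have hs : Function.support (fun x => exp ⟪θ, Γ x⟫) = Set.univ := by
      ext x; simp [Function.mem_support, (exp_pos _).ne']
    rw [hs]
    exact Measure.measure_univ_pos.2 hν
  have hBθint : Integrable (fun x => p x ^ α * exp ((1 - α) * ⟪θ, Γ x⟫)) ν := by
    have h := hsub hθΘ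
    simpa only [Set.mem_setOf_eq, real_inner_smul_right] using h
  have hBθpos := hBpos θ hBθint
  -- rewriting q-powers
  have hqpow : ∀ (ϑ : H) (x : X), q ϑ x ^ (1 - α)
      = exp (-((1 - α) * A ϑ)) * exp ((1 - α) * ⟪ϑ, Γ x⟫) := by
    intro ϑ x
    rw [hq ϑ x, ← exp_mul, ← exp_add]
    congr 1; ring
  have hint_eq : ∀ ϑ : H, (∫ x, p x ^ α * q ϑ x ^ (1 - α) ∂ν)
      = exp (-((1 - α) * A ϑ)) * ∫ x, p x ^ α * exp ((1 - α) * ⟪ϑ, Γ x⟫) ∂ν := by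
    intro ϑ
    rw [← integral_const_mul]
    congr 1; funext x; rw [hqpow ϑ x]; ring
  -- Goal 1
  have hg1 : Integrable (fun x => q θ x • Γ x) ν := by
    have h2 : (fun x => q θ x • Γ x)
        = fun x => exp (-(A θ)) • (exp ⟪θ, Γ x⟫ • Γ x) := by
      funext x
      rw [hq θ x, smul_smul, ← exp_add]
      congr 2; ring
    rw [h2]
    exact (hint1.smul (exp (-(A θ)))).congr (Filter.Eventually.of_forall fun x => rfl)
  -- Goal 2
  have hg2 : Integrable (fun x => (p x ^ α * q θ x ^ (1 - α)) • Γ x) ν := by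
    have h2 : (fun x => (p x ^ α * q θ x ^ (1 - α)) • Γ x)
        = fun x => exp (-((1 - α) * A θ)) •
            ((p x ^ α * exp ((1 - α) * ⟪θ, Γ x⟫)) • Γ x) := by
      funext x
      rw [hqpow θ x, smul_smul]
      congr 1; ring
    rw [h2]
    exact (hint2.smul (exp (-((1 - α) * A θ)))).congr
      (Filter.Eventually.of_forall fun x => rfl)
  refine ⟨hg1, hg2, ?_⟩
  -- derivative of the auxiliary function
  have hDA := hD1.log hZθpos.ne'
  have hDB := (hD2.log hBθpos.ne').const_mul ((α - 1)⁻¹ : ℝ)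
  have hDg := hDA.add hDB
  -- f agrees with the auxiliary function near θ
  have hopen : interior {ϑ : H | Integrable (fun x => exp ⟪ϑ, Γ x⟫) ν} ∈ nhds θ :=
    isOpen_interior.mem_nhds hθint
  have hfeq : f =ᶠ[nhds θ] fun ϑ => log (∫ x, exp ⟪ϑ, Γ x⟫ ∂ν)
      + (α - 1)⁻¹ * log (∫ x, p x ^ α * exp ((1 - α) * ⟪ϑ, Γ x⟫) ∂ν) := by
    filter_upwards [hopen] with ϑ hϑ
    have hϑΘ' : ϑ ∈ {ϑ' : H | Integrable (fun x => exp ⟪ϑ', Γ x⟫) ν} := interior_subset hϑ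
    have hϑΘ : Integrable (fun x => exp ⟪ϑ, Γ x⟫) ν := hϑΘ'
    have hBϑint : Integrable (fun x => p x ^ α * exp ((1 - α) * ⟪ϑ, Γ x⟫)) ν := by
      have h := hsub hϑΘ
      simpa only [Set.mem_setOf_eq, real_inner_smul_right] using h
    have hBϑpos := hBpos ϑ hBϑint
    rw [hf ϑ, hint_eq ϑ, log_mul (exp_ne_zero _) hBϑpos.ne', log_exp, hA ϑ]
    field_simp
    ring
  have hL := hDg.congr_of_eventuallyEq hfeq
  -- identify the gradient vector
  have hexpA : exp (-(A θ)) = (∫ x, exp ⟪θ, Γ x⟫ ∂ν)⁻¹ := by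
    rw [hA, exp_neg, exp_log hZθpos]
  have hm1' : (∫ x, q θ x • Γ x ∂ν)
      = (∫ x, exp ⟪θ, Γ x⟫ ∂ν)⁻¹ • (∫ x, exp ⟪θ, Γ x⟫ • Γ x ∂ν) := by
    calc (∫ x, q θ x • Γ x ∂ν)
        = ∫ x, exp (-(A θ)) • (exp ⟪θ, Γ x⟫ • Γ x) ∂ν := by
          congr 1; funext x
          rw [hq θ x, smul_smul, ← exp_add]
          congr 2; ring
    _ = exp (-(A θ)) • ∫ x, exp ⟪θ, Γ x⟫ • Γ x ∂ν := integral_smul _ _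
    _ = _ := by rw [hexpA]
  have hM2' : (∫ x, (p x ^ α * q θ x ^ (1 - α)) • Γ x ∂ν)
      = exp (-((1 - α) * A θ)) • ∫ x, (p x ^ α * exp ((1 - α) * ⟪θ, Γ x⟫)) • Γ x ∂ν := by
    calc (∫ x, (p x ^ α * q θ x ^ (1 - α)) • Γ x ∂ν)
        = ∫ x, exp (-((1 - α) * A θ)) •
            ((p x ^ α * exp ((1 - α) * ⟪θ, Γ x⟫)) • Γ x) ∂ν := by
          congr 1; funext x
          rw [hqpow θ x, smul_smul]
          congr 1; ring
    _ = _ := integral_smul _ _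
  have hv : ((∫ x, q θ x • Γ x ∂ν)
        - (∫ x, p x ^ α * q θ x ^ (1 - α) ∂ν)⁻¹ •
          (∫ x, (p x ^ α * q θ x ^ (1 - α)) • Γ x ∂ν))
      = (∫ x, exp ⟪θ, Γ x⟫ ∂ν)⁻¹ • (∫ x, exp ⟪θ, Γ x⟫ • Γ x ∂ν)
        - (∫ x, p x ^ α * exp ((1 - α) * ⟪θ, Γ x⟫) ∂ν)⁻¹ •
          (∫ x, (p x ^ α * exp ((1 - α) * ⟪θ, Γ x⟫)) • Γ x ∂ν) := by
    rw [hm1', hint_eq θ, hM2', smul_smul]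
    congr 2
    rw [mul_inv]
    field_simp
  rw [hasGradientAt_iff_hasFDerivAt]
  have hLeq : ((∫ x, exp ⟪θ, Γ x⟫ ∂ν)⁻¹ • innerSL ℝ (∫ x, exp ⟪θ, Γ x⟫ • Γ x ∂ν)
        + (α - 1)⁻¹ • ((∫ x, p x ^ α * exp ((1 - α) * ⟪θ, Γ x⟫) ∂ν)⁻¹ •
          innerSL ℝ ((1 - α) • ∫ x, (p x ^ α * exp ((1 - α) * ⟪θ, Γ x⟫)) • Γ x ∂ν)))
      = InnerProductSpace.toDual ℝ H
          ((∫ x, q θ x • Γ x ∂ν)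
            - (∫ x, p x ^ α * q θ x ^ (1 - α) ∂ν)⁻¹ •
              (∫ x, (p x ^ α * q θ x ^ (1 - α)) • Γ x ∂ν)) := by
    rw [hv]
    refine ContinuousLinearMap.ext fun h => ?_
    simp only [ContinuousLinearMap.add_apply, ContinuousLinearMap.coe_smul',
      Pi.smul_apply, innerSL_apply_apply, InnerProductSpace.toDual_apply_apply, inner_sub_left,
      real_inner_smul_left, smul_eq_mul]
    field_simp
    ring
  rw [hLeq] at hL
  exact hL
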